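/- Let f and g be symmetric polynomials with f(0) = g(0) = 1 and deg f = deg g + 2. Then for any polynomial s(y) = \sum_i s_i y^i with real coefficients and any q \ge deg s, the polynomial f(x)^q s(x g(x)/f(x)) (interpreted as f(x)^{q - deg s} \sum_i s_i (x g(x))^i f(x)^{deg s - i}) is symmetric of degree q \cdot deg f. -/

import Mathlib

open Polynomial

/-- `a_k = a_{n-k}` for all `0 ≤ k ≤ n = deg P`. -/
def SymmPoly (P : Polynomial ℝ) : Prop :=
  ∀ k ≤ P.natDegree, P.coeff k = P.coeff (P.natDegree - k)

lemma symm_reflect {P : Polynomial ℝ} (h : SymmPoly P) :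
    Polynomial.reflect P.natDegree P = P := by
  ext k
  rw [coeff_reflect]
  by_cases hk : k ≤ P.natDegree
  · rw [revAt_le hk]; exact (h k hk).symm
  · rw [revAt_eq_self_of_lt (Nat.lt_of_not_le hk)]

lemma reflect_pow_eq {P : Polynomial ℝ} {n : ℕ}
    (h : Polynomial.reflect n P = P) (hd : P.natDegree ≤ n) (k : ℕ) :
    Polynomial.reflect (k * n) (P ^ k) = P ^ k := by
  induction k with
  | zero => simp [reflect_one]
  | succ k ih =>
    have hb : (P ^ k).natDegree ≤ k * n := by
      rw [natDegree_pow]; exact Nat.mul_le_mul_left k hd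
    rw [pow_succ, Nat.succ_mul, reflect_mul _ _ hb hd, ih, h]

lemma reflect_sum {α : Type*} (t : Finset α) (p : α → Polynomial ℝ) (N : ℕ) :
    Polynomial.reflect N (∑ i ∈ t, p i) = ∑ i ∈ t, Polynomial.reflect N (p i) := by
  classical
  induction t using Finset.induction with
  | empty => simp [reflect_zero]
  | insert _ _ h ih => rw [Finset.sum_insert h, Finset.sum_insert h, reflect_add, ih]

theorem stmt_16 (f g : Polynomial ℝ) (hf0 : f.coeff 0 = 1) (hg0 : g.coeff 0 = 1)
    (hfs : SymmPoly f) (hgs : SymmPoly g)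
    (hdeg : f.natDegree = g.natDegree + 2)
    (s : Polynomial ℝ) (q : ℕ) (hq : s.natDegree ≤ q) :
    Polynomial.reflect (q * f.natDegree)
        (f ^ (q - s.natDegree) *
          ∑ i ∈ Finset.range (s.natDegree + 1),
            C (s.coeff i) * (X * g) ^ i * f ^ (s.natDegree - i)) =
      f ^ (q - s.natDegree) *
        ∑ i ∈ Finset.range (s.natDegree + 1),
          C (s.coeff i) * (X * g) ^ i * f ^ (s.natDegree - i) := by
  have hfr := symm_reflect hfs
  have hgr := symm_reflect hgs
  rw [Finset.mul_sum, reflect_sum]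
  refine Finset.sum_congr rfl fun i hi => ?_
  have hid : i ≤ s.natDegree := Finset.mem_range_succ_iff.mp hi
  have hiq : i ≤ q := hid.trans hq
  -- rearrange the term
  have e1 : f ^ (q - s.natDegree) * (C (s.coeff i) * (X * g) ^ i * f ^ (s.natDegree - i)) =
      C (s.coeff i) * (X ^ i * (g ^ i * f ^ (q - i))) := by
    have hpow : f ^ (q - s.natDegree) * f ^ (s.natDegree - i) = f ^ (q - i) := by
      rw [← pow_add]; congr 1; omega
    calc f ^ (q - s.natDegree) * (C (s.coeff i) * (X * g) ^ i * f ^ (s.natDegree - i))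
        = C (s.coeff i) * (X ^ i * (g ^ i *
            (f ^ (q - s.natDegree) * f ^ (s.natDegree - i)))) := by rw [mul_pow]; ring
      _ = C (s.coeff i) * (X ^ i * (g ^ i * f ^ (q - i))) := by rw [hpow]
  rw [e1]
  obtain ⟨c, rfl⟩ : ∃ c, q = i + c := ⟨q - i, by omega⟩
  have hc : i + c - i = c := by omega
  have hN : (i + c) * f.natDegree = 2 * i + (i * g.natDegree + c * f.natDegree) := by
    rw [hdeg]; ring
  have hb1 : (X ^ i : Polynomial ℝ).natDegree ≤ 2 * i := by
    rw [natDegree_X_pow]; omega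
  have hb2 : (g ^ i * f ^ c).natDegree ≤ i * g.natDegree + c * f.natDegree :=
    natDegree_mul_le.trans (by rw [natDegree_pow, natDegree_pow])
  rw [hc, hN, reflect_C_mul, reflect_mul _ _ hb1 hb2,
    reflect_mul _ _ (by rw [natDegree_pow]) (by rw [natDegree_pow]),
    reflect_pow_eq hgr le_rfl, reflect_pow_eq hfr le_rfl, reflect_monomial,
    revAt_le (by omega : i ≤ 2 * i)]
  rw [show 2 * i - i = i from by omega]
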